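/- Let X₁, X₂ be Banach spaces with measures of non-compactness η₁ on X₁* and η₂ on X₂*, and let T : X₁* → X₂* be a weak*-continuous linear operator. Suppose there exists λ > 0 such that η₂(T(A)) ≤ λ η₁(A) for every weak*-compact subset A of X₁*. Then: (1) for every weak*-compact A ⊆ X₁* and ε > 0, [η₂]'_{λε}(T(A)) ⊆ T([η₁]'_ε(A)); (2) if [η₁]^ω_ε(A) = ∅, then [η₂]^ω_{λε}(T(A)) = ∅. -/

import Mathlib

open Filter Topology Set Pointwise

noncomputable section

namespace Szlenk

variable {E : Type*}

/-- The fragment derivation `[η]'_ε(A)` associated to a set function `η`: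
the points of `A` all of whose neighborhoods `U` satisfy `η (A ∩ cl U) ≥ ε`. -/
def frag [TopologicalSpace E] (η : Set E → ℝ) (ε : ℝ) (A : Set E) : Set E :=
  {x | x ∈ A ∧ ∀ U ∈ 𝓝 x, ε ≤ η (A ∩ closure U)}

/-- Transfinite iterates `[η]^γ_ε(A)` of the fragment derivation. -/
def fragIter [TopologicalSpace E] (η : Set E → ℝ) (ε : ℝ) (A : Set E) (γ : Ordinal.{0}) :
    Set E :=
  Ordinal.limitRecOn γ A (fun _ S => frag η ε S)
    (fun γ _ ih => ⋂ β : {β : Ordinal.{0} // β < γ}, ih β.1 β.2)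

/-- The `ω`-iterated measure `η^ω (A) = inf {ε > 0 : [η]^ω_ε(A) = ∅}`. -/
def etaOmega [TopologicalSpace E] (η : Set E → ℝ) (A : Set E) : ℝ :=
  sInf {ε : ℝ | 0 < ε ∧ fragIter η ε A Ordinal.omega0 = ∅}

/-- The iterates `η^{ω^n}` (with `η^{ω^0} := η` and `η^{ω^{n+1}} := (η^{ω^n})^ω`). -/
def omegaPow [TopologicalSpace E] (η : Set E → ℝ) : ℕ → Set E → ℝ
  | 0 => η
  | n + 1 => etaOmega (omegaPow η n)

/-- `η` is a measure of non compactness (with respect to the closed unit ball `ball`):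
it is nonnegative, vanishes on singletons, is monotone, satisfies
`η (A ∪ B) = max (η A) (η B)`, and `η (A + l • ball) ≤ η A + l * b` for some `b > 0`.
All conditions are required on (weak*-)compact sets only. -/
structure IsMNCOn [TopologicalSpace E] [AddCommGroup E] [Module ℝ E]
    (ball : Set E) (η : Set E → ℝ) : Prop where
  nonneg : ∀ A : Set E, IsCompact A → 0 ≤ η A
  singleton : ∀ x : E, η {x} = 0
  mono : ∀ A B : Set E, IsCompact A → IsCompact B → A ⊆ B → η A ≤ η B
  union : ∀ A B : Set E, IsCompact A → IsCompact B → η (A ∪ B) = max (η A) (η B)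
  ball_add : ∃ b > 0, ∀ A : Set E, IsCompact A → ∀ l : ℝ, 0 < l →
    η (A + l • ball) ≤ η A + l * b

/-- `η` is a measure of non compactness with the explicit constant `b` in property (iii). -/
structure IsMNCWith [TopologicalSpace E] [AddCommGroup E] [Module ℝ E]
    (ball : Set E) (b : ℝ) (η : Set E → ℝ) : Prop where
  b_pos : 0 < b
  nonneg : ∀ A : Set E, IsCompact A → 0 ≤ η A
  singleton : ∀ x : E, η {x} = 0
  mono : ∀ A B : Set E, IsCompact A → IsCompact B → A ⊆ B → η A ≤ η B
  union : ∀ A B : Set E, IsCompact A → IsCompact B → η (A ∪ B) = max (η A) (η B)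
  ball_add : ∀ A : Set E, IsCompact A → ∀ l : ℝ, 0 < l →
    η (A + l • ball) ≤ η A + l * b

/-- A sublinear measure of non compactness: homogeneous and subadditive. -/
structure IsSublinear [TopologicalSpace E] [AddCommGroup E] [Module ℝ E]
    (η : Set E → ℝ) : Prop where
  homog : ∀ (l : ℝ) (A : Set E), IsCompact A → η (l • A) = |l| * η A
  subadd : ∀ A B : Set E, IsCompact A → IsCompact B → η (A + B) ≤ η A + η B

variable {X : Type*} [NormedAddCommGroup X] [NormedSpace ℝ X]

/-- The dual norm on `X*` (the dual being equipped with its weak* topology). -/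
def dnorm (f : WeakDual ℝ X) : ℝ := ‖WeakDual.toStrongDual f‖

/-- The closed unit ball of `X*`. -/
def dualBall (X : Type*) [NormedAddCommGroup X] [NormedSpace ℝ X] :
    Set (WeakDual ℝ X) := {f | dnorm f ≤ 1}

/-- The slice derivation `⟨η⟩'_ε(A)`: the points of `A` such that every weak*-closed
halfspace containing them meets `A` in a set of `η`-measure at least `ε`. -/
def sliceD (η : Set (WeakDual ℝ X) → ℝ) (ε : ℝ) (A : Set (WeakDual ℝ X)) :
    Set (WeakDual ℝ X) :=
  {x | x ∈ A ∧ ∀ (f : X) (c : ℝ), c ≤ x f → ε ≤ η (A ∩ {y | c ≤ y f})}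

/-- Transfinite iterates `⟨η⟩^γ_ε(A)` of the slice derivation. -/
def sliceIter (η : Set (WeakDual ℝ X) → ℝ) (ε : ℝ) (A : Set (WeakDual ℝ X))
    (γ : Ordinal.{0}) : Set (WeakDual ℝ X) :=
  Ordinal.limitRecOn γ A (fun _ S => sliceD η ε S)
    (fun γ _ ih => ⋂ β : {β : Ordinal.{0} // β < γ}, ih β.1 β.2)

/-- A weak*-closed halfspace of `X*`. -/
def IsHalfspace (H : Set (WeakDual ℝ X)) : Prop :=
  ∃ (f : X) (c : ℝ), H = {y : WeakDual ℝ X | c ≤ y f}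

/-- The Kuratowski measure of non compactness associated to a (dual) norm `Nd`:
the infimum of all `ε > 0` such that `A` can be covered by finitely many balls of
diameter `ε` (i.e. of radius `ε / 2`). -/
def kurN (Nd : WeakDual ℝ X → ℝ) (A : Set (WeakDual ℝ X)) : ℝ :=
  sInf {ε : ℝ | 0 < ε ∧
    ∃ F : Finset (WeakDual ℝ X), A ⊆ ⋃ c ∈ F, {y | Nd (y - c) ≤ ε / 2}}

/-- The Kuratowski measure of non compactness on `X*`. -/
def kur (A : Set (WeakDual ℝ X)) : ℝ := kurN dnorm A

/-- The iterated sets `A^ε_β` of the convex Szlenk derivation: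
`A^ε_{β+1}` is the weak*-closed convex hull of `[σ]'_ε(A^ε_β)`. -/
def convIter (ε : ℝ) (K : Set (WeakDual ℝ X)) (γ : Ordinal.{0}) : Set (WeakDual ℝ X) :=
  Ordinal.limitRecOn γ K (fun _ S => closure (convexHull ℝ (frag kur ε S)))
    (fun γ _ ih => ⋂ β : {β : Ordinal.{0} // β < γ}, ih β.1 β.2)

/-- The families `𝒯_α` of trees on `ℕ`. A tree is a set of finite sequences of
naturals (closed under initial segments); the root is the empty sequence, and
`(n)⌢s` is represented by `n :: s`. `𝒯_0 = {{∅}}`, and `T ∈ 𝒯_α` for `α ≥ 1` if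
`T = {∅} ∪ ⋃_k (n_k)⌢T_k` with `n_k` strictly increasing, `T_k ∈ 𝒯_{α_k}`, where
`α_k = β` for all `k` if `α = β + 1`, and `α_k ↗ α` if `α` is a limit ordinal. -/
inductive IsTreeFam : Ordinal.{0} → Set (List ℕ) → Prop
  | zero : IsTreeFam 0 {[]}
  | node {α : Ordinal.{0}} (nk : ℕ → ℕ) (αk : ℕ → Ordinal.{0}) (Tk : ℕ → Set (List ℕ))
      (hnk : StrictMono nk) (hTk : ∀ k, IsTreeFam (αk k) (Tk k))
      (hα : (∃ β, α = β + 1 ∧ ∀ k, αk k = β) ∨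
            (Order.IsSuccLimit α ∧ StrictMono αk ∧ α = ⨆ k, αk k)) :
      IsTreeFam α ({[]} ∪ ⋃ k, (List.cons (nk k)) '' Tk k)

/-- A family `(x_s)_{s ∈ T}` is weak*-continuous: `x_{s⌢n} → x_s` (in the ambient,
i.e. weak*, topology) along the children of every node `s` of `T`. -/
def IsContFam [TopologicalSpace E] (T : Set (List ℕ)) (x : List ℕ → E) : Prop :=
  ∀ s ∈ T, Tendsto (fun n : ℕ => x (s ++ [n]))
    (atTop ⊓ 𝓟 {n : ℕ | s ++ [n] ∈ T}) (𝓝 (x s))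

/-- A family `(x_s)_{s ∈ T}` in `X*` is `ε`-separated: `‖x_s - x_{s⌢n}‖ ≥ ε`. -/
def IsSepFam (ε : ℝ) (T : Set (List ℕ)) (x : List ℕ → WeakDual ℝ X) : Prop :=
  ∀ s ∈ T, ∀ n : ℕ, s ++ [n] ∈ T → ε ≤ dnorm (x s - x (s ++ [n]))

/-- Norm distance from a point of `X*` to a subset of `X*`. -/
def ddist (f : WeakDual ℝ X) (A : Set (WeakDual ℝ X)) : ℝ :=
  sInf ((fun g => dnorm (f - g)) '' A)

/-- The product `η₁ × η₂` of two measures of non compactness. -/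
def prodMNC {X₁ X₂ : Type*} [NormedAddCommGroup X₁] [NormedSpace ℝ X₁]
    [NormedAddCommGroup X₂] [NormedSpace ℝ X₂]
    (η₁ : Set (WeakDual ℝ X₁) → ℝ) (η₂ : Set (WeakDual ℝ X₂) → ℝ)
    (A : Set (WeakDual ℝ X₁ × WeakDual ℝ X₂)) : ℝ :=
  sInf {ε : ℝ | 0 < ε ∧ ∃ (n : ℕ) (A₁ : Fin n → Set (WeakDual ℝ X₁))
      (A₂ : Fin n → Set (WeakDual ℝ X₂)),
      (∀ i, IsCompact (A₁ i) ∧ IsCompact (A₂ i) ∧ η₁ (A₁ i) < ε ∧ η₂ (A₂ i) < ε) ∧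
      A ⊆ ⋃ i, A₁ i ×ˢ A₂ i}

/-- The dual norm on `X*` associated to an (equivalent) norm `N` on `X`. -/
def dualNormOf (N : X → ℝ) (f : WeakDual ℝ X) : ℝ :=
  sSup ((fun x => f x) '' {x : X | N x ≤ 1})

/-- The closed unit ball of the dual norm associated to a norm `N` on `X`. -/
def dualBallOf (N : X → ℝ) : Set (WeakDual ℝ X) :=
  {f : WeakDual ℝ X | ∀ x : X, |f x| ≤ N x}


section AuxFrag

variable {E : Type*} [TopologicalSpace E]

theorem frag_subset_self (η : Set E → ℝ) (ε : ℝ) (A : Set E) : frag η ε A ⊆ A :=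
  fun _ h => h.1

theorem isCompact_frag {η : Set E → ℝ} {ε : ℝ} {A : Set E} (hA : IsCompact A) :
    IsCompact (frag η ε A) := by
  have : frag η ε A = A ∩ {x | ∀ U ∈ 𝓝 x, ε ≤ η (A ∩ closure U)} := rfl
  rw [this]
  refine hA.inter_right ?_
  rw [← isOpen_compl_iff, isOpen_iff_mem_nhds]
  intro x hx
  simp only [mem_compl_iff, mem_setOf_eq, not_forall, not_le, exists_prop] at hx
  obtain ⟨U, hU, hlt⟩ := hx
  refine mem_of_superset (interior_mem_nhds.2 hU) fun z hz => ?_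
  simp only [mem_compl_iff, mem_setOf_eq, not_forall, not_le, exists_prop]
  exact ⟨U, mem_interior_iff_mem_nhds.1 hz, hlt⟩

theorem frag_mono {η : Set E → ℝ} {ε : ℝ} {A B : Set E}
    (hA : IsCompact A) (hB : IsCompact B) (hAB : A ⊆ B)
    (hmono : ∀ S S' : Set E, IsCompact S → IsCompact S' → S ⊆ S' → η S ≤ η S') :
    frag η ε A ⊆ frag η ε B := by
  rintro x ⟨hxA, hx⟩
  refine ⟨hAB hxA, fun U hU => (hx U hU).trans ?_⟩
  exact hmono _ _ (hA.inter_right isClosed_closure) (hB.inter_right isClosed_closure)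
    (inter_subset_inter_left _ hAB)

theorem fragIter_natCast (η : Set E → ℝ) (ε : ℝ) (A : Set E) :
    ∀ n : ℕ, fragIter η ε A n = (frag η ε)^[n] A := by
  intro n
  induction n with
  | zero =>
    show fragIter η ε A 0 = A
    unfold fragIter
    rw [Ordinal.limitRecOn_zero]
  | succ n ih =>
    have hcast : ((n + 1 : ℕ) : Ordinal.{0}) = Order.succ (n : Ordinal.{0}) := by
      rw [Nat.cast_succ, Ordinal.add_one_eq_succ]
    unfold fragIter
    rw [hcast, Ordinal.limitRecOn_succ, Function.iterate_succ']
    exact congrArg (frag η ε) ih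

theorem fragIter_omega0 (η : Set E → ℝ) (ε : ℝ) (A : Set E) :
    fragIter η ε A Ordinal.omega0 = ⋂ n : ℕ, (frag η ε)^[n] A := by
  unfold fragIter
  rw [Ordinal.limitRecOn_limit _ _ _ _ Ordinal.isSuccLimit_omega0]
  ext x
  simp only [mem_iInter, Subtype.forall]
  constructor
  · intro h n
    rw [← fragIter_natCast]
    exact h (n : Ordinal.{0}) (Ordinal.nat_lt_omega0 n)
  · intro h β hβ
    obtain ⟨n, rfl⟩ := Ordinal.lt_omega0.1 hβ
    have : Ordinal.limitRecOn (n : Ordinal.{0}) A (fun _ S => frag η ε S)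
        (fun γ _ ih => ⋂ b : {b : Ordinal.{0} // b < γ}, ih b.1 b.2)
        = fragIter η ε A n := rfl
    rw [this, fragIter_natCast]
    exact h n

theorem eta_biUnion_lt {E : Type*} [TopologicalSpace E] [AddCommGroup E] [Module ℝ E]
    {ball : Set E} {η : Set E → ℝ} (h : IsMNCOn ball η) {c : ℝ} (hc : 0 < c)
    {ι : Type*} [DecidableEq ι] (t : Finset ι) (f : ι → Set E) :
    (∀ i ∈ t, IsCompact (f i)) → (∀ i ∈ t, η (f i) < c) → η (⋃ i ∈ t, f i) < c := by
  have hηe : η ∅ ≤ 0 := by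
    have := h.mono ∅ {0} isCompact_empty isCompact_singleton (empty_subset _)
    simpa [h.singleton 0] using this
  induction t using Finset.induction with
  | empty => intro _ _; simpa using lt_of_le_of_lt hηe hc
  | @insert a s ha ih =>
    intro hcomp hlt
    rw [Finset.set_biUnion_insert]
    have hsc : IsCompact (⋃ i ∈ s, f i) :=
      s.finite_toSet.isCompact_biUnion fun i hi => hcomp i (Finset.mem_insert_of_mem hi)
    rw [h.union _ _ (hcomp a (Finset.mem_insert_self a s)) hsc]
    exact max_lt (hlt a (Finset.mem_insert_self a s))
      (ih (fun i hi => hcomp i (Finset.mem_insert_of_mem hi))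
        (fun i hi => hlt i (Finset.mem_insert_of_mem hi)))

end AuxFrag

/-- Let `T : X₁* → X₂*` be a weak*-continuous linear operator and suppose
`η₂(T(A)) ≤ lam * η₁(A)` for every weak*-compact `A ⊆ X₁*`. Then
(1) `[η₂]'_{lam ε}(T(A)) ⊆ T([η₁]'_ε(A))`;
(2) if `[η₁]^ω_ε(A) = ∅` then `[η₂]^ω_{lam ε}(T(A)) = ∅`. -/
theorem frag_image_of_dominated
    {X₁ X₂ : Type*} [NormedAddCommGroup X₁] [NormedSpace ℝ X₁] [CompleteSpace X₁]
    [NormedAddCommGroup X₂] [NormedSpace ℝ X₂] [CompleteSpace X₂]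
    (η₁ : Set (WeakDual ℝ X₁) → ℝ) (η₂ : Set (WeakDual ℝ X₂) → ℝ)
    (h₁ : IsMNCOn (dualBall X₁) η₁) (h₂ : IsMNCOn (dualBall X₂) η₂)
    (T : WeakDual ℝ X₁ →L[ℝ] WeakDual ℝ X₂) (lam : ℝ) (hlam : 0 < lam)
    (hT : ∀ A : Set (WeakDual ℝ X₁), IsCompact A → η₂ (⇑T '' A) ≤ lam * η₁ A) :
    (∀ A : Set (WeakDual ℝ X₁), IsCompact A → ∀ ε : ℝ, 0 < ε →
      frag η₂ (lam * ε) (⇑T '' A) ⊆ ⇑T '' frag η₁ ε A) ∧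
    (∀ A : Set (WeakDual ℝ X₁), IsCompact A → ∀ ε : ℝ, 0 < ε →
      fragIter η₁ ε A Ordinal.omega0 = ∅ →
      fragIter η₂ (lam * ε) (⇑T '' A) Ordinal.omega0 = ∅) := by
  classical
  have hTcont : Continuous T := T.continuous
  have part1 : ∀ A : Set (WeakDual ℝ X₁), IsCompact A → ∀ ε : ℝ, 0 < ε →
      frag η₂ (lam * ε) (⇑T '' A) ⊆ ⇑T '' frag η₁ ε A := by
    intro A hA ε hε y hy
    obtain ⟨hyTA, hy2⟩ := hy
    by_contra hcon
    -- every preimage of y in A fails the frag condition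
    have key : ∀ x ∈ A ∩ ⇑T ⁻¹' {y}, ∃ U : Set (WeakDual ℝ X₁),
        IsOpen U ∧ x ∈ U ∧ η₁ (A ∩ closure U) < ε := by
      rintro x ⟨hxA, hxy⟩
      have hxf : x ∉ frag η₁ ε A := fun hxf => hcon ⟨x, hxf, hxy⟩
      simp only [frag, mem_setOf_eq, not_and] at hxf
      push_neg at hxf
      obtain ⟨U, hU, hlt⟩ := hxf hxA
      refine ⟨interior U, isOpen_interior, mem_interior_iff_mem_nhds.2 hU, ?_⟩
      refine lt_of_le_of_lt ?_ hlt
      exact h₁.mono _ _ (hA.inter_right isClosed_closure) (hA.inter_right isClosed_closure)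
        (inter_subset_inter_right _ (closure_mono interior_subset))
    choose! U hUopen hUmem hUsmall using key
    have hScomp : IsCompact (A ∩ ⇑T ⁻¹' {y}) :=
      hA.inter_right (isClosed_singleton.preimage hTcont)
    obtain ⟨t, hts, hcover⟩ := hScomp.elim_nhds_subcover U fun x hx =>
      (hUopen x hx).mem_nhds (hUmem x hx)
    set V : Set (WeakDual ℝ X₁) := ⋃ x ∈ t, U x with hV
    have hVopen : IsOpen V := isOpen_biUnion fun i hi => hUopen i (hts i hi)
    have hKcomp : IsCompact (A \ V) := hA.diff hVopen
    have hyK : y ∉ ⇑T '' (A \ V) := by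
      rintro ⟨a, ⟨haA, haV⟩, rfl⟩
      exact haV (hcover ⟨haA, rfl⟩)
    have hTKclosed : IsClosed (⇑T '' (A \ V)) := (hKcomp.image hTcont).isClosed
    obtain ⟨W, hWnhds, hWclosed, hWsub⟩ :=
      exists_mem_nhds_isClosed_subset (hTKclosed.isOpen_compl.mem_nhds hyK)
    have hge : lam * ε ≤ η₂ ((⇑T '' A) ∩ W) := by
      have := hy2 W hWnhds
      rwa [hWclosed.closure_eq] at this
    have hsub : (⇑T '' A) ∩ W ⊆ ⋃ x ∈ t, ⇑T '' (A ∩ closure (U x)) := by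
      rintro z ⟨⟨a, haA, rfl⟩, hzW⟩
      have haV : a ∈ V := by
        by_contra haV
        exact hWsub hzW (mem_image_of_mem _ ⟨haA, haV⟩)
      obtain ⟨x, hxt, hax⟩ := by simpa only [hV, mem_iUnion, exists_prop] using haV
      exact mem_biUnion hxt ⟨a, ⟨haA, subset_closure hax⟩, rfl⟩
    have hUnion_comp : IsCompact (⋃ x ∈ t, ⇑T '' (A ∩ closure (U x))) :=
      t.finite_toSet.isCompact_biUnion fun i _ =>
        (hA.inter_right isClosed_closure).image hTcont
    have hlt2 : η₂ (⋃ x ∈ t, ⇑T '' (A ∩ closure (U x))) < lam * ε := by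
      refine eta_biUnion_lt h₂ (by positivity) t _
        (fun i _ => (hA.inter_right isClosed_closure).image hTcont) (fun i hi => ?_)
      calc η₂ (⇑T '' (A ∩ closure (U i))) ≤ lam * η₁ (A ∩ closure (U i)) :=
            hT _ (hA.inter_right isClosed_closure)
        _ < lam * ε := mul_lt_mul_of_pos_left (hUsmall i (hts i hi)) hlam
    have hle : η₂ ((⇑T '' A) ∩ W) ≤ η₂ (⋃ x ∈ t, ⇑T '' (A ∩ closure (U x))) :=
      h₂.mono _ _ ((hA.image hTcont).inter_right hWclosed) hUnion_comp hsub
    linarith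
  refine ⟨part1, ?_⟩
  intro A hA ε hε hempty
  rw [fragIter_omega0] at hempty ⊢
  set B : ℕ → Set (WeakDual ℝ X₁) := fun n => (frag η₁ ε)^[n] A with hB
  have hBcomp : ∀ n, IsCompact (B n) := by
    intro n
    induction n with
    | zero => exact hA
    | succ n ih =>
      show IsCompact ((frag η₁ ε)^[n + 1] A)
      rw [Function.iterate_succ']
      exact isCompact_frag ih
  have hBanti : Antitone B := by
    refine antitone_nat_of_succ_le fun n => ?_
    show (frag η₁ ε)^[n + 1] A ⊆ (frag η₁ ε)^[n] A
    rw [Function.iterate_succ']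
    exact frag_subset_self _ _ _
  have hB₂comp : ∀ n, IsCompact ((frag η₂ (lam * ε))^[n] (⇑T '' A)) := by
    intro n
    induction n with
    | zero => exact hA.image hTcont
    | succ n ih =>
      rw [Function.iterate_succ']
      exact isCompact_frag ih
  have hincl : ∀ n, (frag η₂ (lam * ε))^[n] (⇑T '' A) ⊆ ⇑T '' B n := by
    intro n
    induction n with
    | zero => exact subset_rfl
    | succ n ih =>
      have h1 : (frag η₂ (lam * ε))^[n + 1] (⇑T '' A)
          = frag η₂ (lam * ε) ((frag η₂ (lam * ε))^[n] (⇑T '' A)) := by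
        rw [Function.iterate_succ']; rfl
      have h2 : B (n + 1) = frag η₁ ε (B n) := by
        show (frag η₁ ε)^[n + 1] A = _
        rw [Function.iterate_succ']; rfl
      rw [h1, h2]
      refine (frag_mono (hB₂comp n) ((hBcomp n).image hTcont) ih h₂.mono).trans ?_
      exact part1 (B n) (hBcomp n) ε hε
  have hinter : A ∩ ⋂ n, B n = ∅ := by rw [hempty]; exact inter_empty A
  obtain ⟨u, hu⟩ := hA.elim_finite_subfamily_closed B (fun n => (hBcomp n).isClosed) hinter
  set N : ℕ := u.sup id with hN
  have hBN : B N = ∅ := by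
    refine eq_empty_of_subset_empty ?_
    rw [← hu]
    refine subset_inter (hBanti (Nat.zero_le N)) (subset_iInter₂ fun i hi => ?_)
    exact hBanti (Finset.le_sup (f := id) hi)
  refine eq_empty_of_subset_empty ?_
  refine (iInter_subset _ N).trans ((hincl N).trans ?_)
  rw [hBN, image_empty]

end Szlenk
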